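/- Let a,b≥0, −1<c,d≤0, 0≤q<1 with ab<1, and let N∈ℕ. Then the normalization constant Z_N^{(q,a,b,c,d)} = ∑_{λ∈TL_N} wt_N^{(q,a,b,c,d)}(λ) is finite, i.e., the family of nonnegative two-layer weights is summable over the countable set TL_N; hence the two-layer measure P_N^{(q,a,b,c,d)} is a well-defined probability measure on TL_N. -/

import Mathlib

/-- A Bernoulli path on `{0,…,N}`: increments in `{0,1}`. -/
def IsBPath (N : ℕ) (L : Fin (N+1) → ℤ) : Prop :=
  ∀ j : Fin N, L j.succ = L j.castSucc ∨ L j.succ = L j.castSucc + 1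

/-- The two-layer configuration space `TL_N`. -/
def TLset (N : ℕ) : Set ((Fin (N+1) → ℤ) × (Fin (N+1) → ℤ)) :=
  {p | p.1 0 = 0 ∧ (∀ j, p.2 j ≤ p.1 j) ∧ IsBPath N p.1 ∧ IsBPath N p.2}

/-- The finite q-Pochhammer symbol `(z;q)_n = ∏_{j=0}^{n-1} (1 - z qʲ)`. -/
noncomputable def qPoch (z q : ℝ) (n : ℕ) : ℝ := ∏ j ∈ Finset.range n, (1 - z * q ^ j)

/-- The local weight `W^{(q,c,d)}(x | u,v)`. -/
noncomputable def Wfac (q c d : ℝ) (x u v : ℤ) : ℝ :=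
  if u = 1 ∧ v = 0 then 1 - q ^ x.toNat
  else if u = 1 ∧ v = 1 then 1 + d * q ^ x.toNat
  else if u = 0 ∧ v = 0 then 1 + c * q ^ x.toNat
  else 1 - c * d * q ^ x.toNat

/-- The two-layer weight `wt_N^{(q,a,b,c,d)}`. -/
noncomputable def twt (N : ℕ) (q a b c d : ℝ) (p : (Fin (N+1) → ℤ) × (Fin (N+1) → ℤ)) : ℝ :=
  a ^ (p.1 0 - p.2 0).toNat * b ^ (p.1 (Fin.last N) - p.2 (Fin.last N)).toNat *
    (qPoch (c * d) q (p.1 (Fin.last N) - p.2 (Fin.last N)).toNat /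
      qPoch q q (p.1 (Fin.last N) - p.2 (Fin.last N)).toNat) *
    ∏ j : Fin N, Wfac q c d (p.1 j.succ - p.2 j.succ)
      (p.1 j.succ - p.1 j.castSucc) (p.2 j.succ - p.2 j.castSucc)


section Aux

lemma exp_le_one_sub {x : ℝ} (h1 : x < 1) :
    Real.exp (-(x / (1 - x))) ≤ 1 - x := by
  have hx : 0 < 1 - x := by linarith
  have h := Real.add_one_le_exp (x / (1 - x))
  have h2 : (1 - x)⁻¹ ≤ Real.exp (x / (1 - x)) := by
    rw [inv_eq_one_div]
    calc (1:ℝ)/(1-x) = x/(1-x) + 1 := by field_simp; ring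
    _ ≤ _ := h
  rw [Real.exp_neg]
  calc (Real.exp (x / (1-x)))⁻¹ ≤ ((1-x)⁻¹)⁻¹ :=
        inv_anti₀ (by positivity) h2
  _ = 1 - x := inv_inv _

lemma qPoch_q_lower {q : ℝ} (hq0 : 0 ≤ q) (hq1 : q < 1) (n : ℕ) :
    Real.exp (-(q / (1 - q)^2)) ≤ qPoch q q n := by
  rw [qPoch]
  have hq' : 0 < 1 - q := by linarith
  have step : ∀ j ∈ Finset.range n, Real.exp (-(q * q ^ j / (1 - q))) ≤ 1 - q * q ^ j := by
    intro j _
    set x := q * q ^ j with hx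
    have hx0 : 0 ≤ x := by positivity
    have hxq : x ≤ q := by
      calc x ≤ q * 1 := mul_le_mul_of_nonneg_left (pow_le_one₀ hq0 hq1.le) hq0
      _ = q := mul_one q
    have hx1 : x < 1 := lt_of_le_of_lt hxq hq1
    calc Real.exp (-(x / (1-q))) ≤ Real.exp (-(x / (1-x))) := by
          apply Real.exp_le_exp.mpr
          apply neg_le_neg
          apply div_le_div_of_nonneg_left hx0 (by linarith) (by linarith)
    _ ≤ 1 - x := exp_le_one_sub hx1
  calc Real.exp (-(q / (1 - q)^2))
      ≤ Real.exp (∑ j ∈ Finset.range n, -(q * q ^ j / (1 - q))) := by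
        apply Real.exp_le_exp.mpr
        have hsum : ∑ j ∈ Finset.range n, -(q * q ^ j / (1 - q))
            = -((∑ j ∈ Finset.range n, q ^ j) * (q / (1-q))) := by
          rw [Finset.sum_neg_distrib, Finset.sum_mul, neg_inj]
          exact Finset.sum_congr rfl (fun j _ => by rw [mul_div_assoc]; ring)
        rw [hsum, neg_le_neg_iff]
        have hgs : ∑ j ∈ Finset.range n, q ^ j ≤ (1-q)⁻¹ := by
          rw [geom_sum_eq (by linarith : q ≠ 1) n]
          have h1 : (q ^ n - 1) / (q - 1) = (1 - q ^ n)/(1 - q) := by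
            rw [← neg_div_neg_eq]; ring_nf
          rw [h1, inv_eq_one_div, div_le_div_iff₀ hq' hq']
          nlinarith [pow_nonneg hq0 n]
        calc (∑ j ∈ Finset.range n, q ^ j) * (q / (1-q)) ≤ (1-q)⁻¹ * (q/(1-q)) :=
              mul_le_mul_of_nonneg_right hgs (by positivity)
        _ = q / (1-q)^2 := by rw [inv_mul_eq_div, div_div, ← pow_two]
  _ = ∏ j ∈ Finset.range n, Real.exp (-(q * q ^ j / (1 - q))) := Real.exp_sum _ _
  _ ≤ _ := Finset.prod_le_prod (fun j _ => (Real.exp_pos _).le) step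

lemma bpath_bound {N : ℕ} {L : Fin (N+1) → ℤ} (h : IsBPath N L) (j : Fin (N+1)) :
    L 0 ≤ L j ∧ L j ≤ L 0 + j.val := by
  induction j using Fin.induction with
  | zero => simp
  | succ i ih =>
    have hs : (((i.succ : Fin (N+1)).val : ℤ)) = (i.val : ℤ) + 1 := by simp
    have hv : (((i.castSucc : Fin (N+1)).val : ℤ)) = (i.val : ℤ) := by simp
    rcases h i with h' | h' <;> rw [h'] <;> omega

lemma Wfac_mem {q c d : ℝ}
    (hc1 : -1 < c) (hc2 : c ≤ 0) (hd1 : -1 < d) (hd2 : d ≤ 0)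
    (hq0 : 0 ≤ q) (hq1 : q < 1) (x u v : ℤ) :
    0 ≤ Wfac q c d x u v ∧ Wfac q c d x u v ≤ 1 := by
  have hqn0 : 0 ≤ q ^ x.toNat := by positivity
  have hqn1 : q ^ x.toNat ≤ 1 := pow_le_one₀ hq0 hq1.le
  have hcd0 : 0 ≤ c * d := by nlinarith
  have hcd1 : c * d < 1 := by nlinarith
  rw [Wfac]
  constructor <;> (split_ifs <;> nlinarith)

lemma bpath_eq_of_incr {N : ℕ} {L L' : Fin (N+1) → ℤ}
    (hL : IsBPath N L) (hL' : IsBPath N L') (h0 : L 0 = L' 0)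
    (hstep : ∀ j : Fin N,
      decide (L j.succ = L j.castSucc + 1) = decide (L' j.succ = L' j.castSucc + 1)) :
    L = L' := by
  funext j
  induction j using Fin.induction with
  | zero => exact h0
  | succ i ih =>
    have hd := hstep i
    simp only [decide_eq_decide] at hd
    have h1 := hL i
    have h2 := hL' i
    omega

end Aux

/-- The finiteness of the normalization constant `Z_N^{(q,a,b,c,d)}`: the two-layer weights are
summable over `TL_N`, and their total sum is positive, so that the two-layer measure
`P_N^{(q,a,b,c,d)} = wt/Z` is a well-defined probability measure. -/
theorem stmt6 (q a b c d : ℝ)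
    (ha : 0 ≤ a) (hb : 0 ≤ b)
    (hc1 : -1 < c) (hc2 : c ≤ 0) (hd1 : -1 < d) (hd2 : d ≤ 0)
    (hq0 : 0 ≤ q) (hq1 : q < 1) (hab : a * b < 1) (N : ℕ) :
    Summable (fun p : TLset N => twt N q a b c d p.val) ∧
      0 < ∑' p : TLset N, twt N q a b c d p.val := by
  classical
  set Cq := Real.exp (-(q / (1 - q)^2)) with hCqdef
  have hCq : 0 < Cq := Real.exp_pos _
  have hqq : ∀ n, Cq ≤ qPoch q q n := qPoch_q_lower hq0 hq1
  have hqqpos : ∀ n, 0 < qPoch q q n := fun n => lt_of_lt_of_le hCq (hqq n)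
  have hcd0 : 0 ≤ c * d := by nlinarith
  have hcd1 : c * d < 1 := by nlinarith
  have hpcd : ∀ n, 0 ≤ qPoch (c*d) q n ∧ qPoch (c*d) q n ≤ 1 := by
    intro n
    have hf : ∀ j ∈ Finset.range n, 0 ≤ 1 - (c*d) * q ^ j ∧ 1 - (c*d) * q ^ j ≤ 1 := by
      intro j _
      have h1 : 0 ≤ q ^ j := by positivity
      have h2 : q ^ j ≤ 1 := pow_le_one₀ hq0 hq1.le
      constructor <;> nlinarith
    rw [qPoch]
    exact ⟨Finset.prod_nonneg (fun j hj => (hf j hj).1),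
      Finset.prod_le_one (fun j hj => (hf j hj).1) (fun j hj => (hf j hj).2)⟩
  have htwt0 : ∀ p, 0 ≤ twt N q a b c d p := by
    intro p
    rw [twt]
    apply mul_nonneg
    apply mul_nonneg (mul_nonneg (pow_nonneg ha _) (pow_nonneg hb _))
    · exact div_nonneg (hpcd _).1 (hqqpos _).le
    · exact Finset.prod_nonneg fun j _ => (Wfac_mem hc1 hc2 hd1 hd2 hq0 hq1 _ _ _).1
  set M := max 1 a * max 1 b with hMdef
  set r := a * b with hrdef
  have hr0 : 0 ≤ r := mul_nonneg ha hb
  have hM1 : (1:ℝ) ≤ M := one_le_mul_of_one_le_of_one_le (le_max_left 1 a) (le_max_left 1 b)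
  set G : ℕ → ℝ := fun k => (M ^ N / Cq) * r ^ (k - N) with hGdef
  -- the key pointwise bound
  have hkey : ∀ p : TLset N, twt N q a b c d p.val ≤ G ((-(p.val.2 0)).toNat) := by
    rintro ⟨p, h0, hle, b1, b2⟩
    simp only [twt]
    have hb1 := bpath_bound b1 (Fin.last N)
    have hb2 := bpath_bound b2 (Fin.last N)
    rw [Fin.val_last] at hb1 hb2
    set k₁ := (p.1 0 - p.2 0).toNat with hk1
    set k₂ := (p.1 (Fin.last N) - p.2 (Fin.last N)).toNat with hk2
    have hg0 : (0:ℤ) ≤ p.1 0 - p.2 0 := by have := hle 0; omega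
    have hgN : (0:ℤ) ≤ p.1 (Fin.last N) - p.2 (Fin.last N) := by
      have := hle (Fin.last N); omega
    have hk12 : k₁ ≤ k₂ + N ∧ k₂ ≤ k₁ + N := by
      constructor <;> [skip; skip] <;> omega
    have hkeq : (-(p.2 0)).toNat = k₁ := by omega
    set m := min k₁ k₂ with hm
    have hA : a ^ k₁ * b ^ k₂ ≤ M ^ N * r ^ (k₁ - N) := by
      have e1 : a ^ k₁ = a ^ m * a ^ (k₁ - m) := by
        rw [← pow_add]; congr 1; omega
      have e2 : b ^ k₂ = b ^ m * b ^ (k₂ - m) := by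
        rw [← pow_add]; congr 1; omega
      have hma : a ^ (k₁ - m) ≤ (max 1 a) ^ N :=
        le_trans (pow_le_pow_left₀ ha (le_max_right 1 a) _)
          (pow_le_pow_right₀ (le_max_left 1 a) (by omega))
      have hmb : b ^ (k₂ - m) ≤ (max 1 b) ^ N :=
        le_trans (pow_le_pow_left₀ hb (le_max_right 1 b) _)
          (pow_le_pow_right₀ (le_max_left 1 b) (by omega))
      have hrm : r ^ m ≤ r ^ (k₁ - N) :=
        pow_le_pow_of_le_one hr0 hab.le (by omega)
      calc a ^ k₁ * b ^ k₂ = r ^ m * (a ^ (k₁ - m) * b ^ (k₂ - m)) := by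
            rw [e1, e2, hrdef, mul_pow]; ring
      _ ≤ r ^ (k₁ - N) * ((max 1 a) ^ N * (max 1 b) ^ N) := by
            apply mul_le_mul hrm _ (by positivity) (by positivity)
            exact mul_le_mul hma hmb (by positivity) (by positivity)
      _ = M ^ N * r ^ (k₁ - N) := by rw [hMdef, mul_pow]; ring
    have hratio : qPoch (c*d) q k₂ / qPoch q q k₂ ≤ 1 / Cq :=
      div_le_div₀ zero_le_one (hpcd k₂).2 hCq (hqq k₂)
    have hprod : (∏ j : Fin N, Wfac q c d (p.1 j.succ - p.2 j.succ)
        (p.1 j.succ - p.1 j.castSucc) (p.2 j.succ - p.2 j.castSucc)) ≤ 1 :=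
      Finset.prod_le_one (fun j _ => (Wfac_mem hc1 hc2 hd1 hd2 hq0 hq1 _ _ _).1)
        (fun j _ => (Wfac_mem hc1 hc2 hd1 hd2 hq0 hq1 _ _ _).2)
    have hprod0 : (0:ℝ) ≤ ∏ j : Fin N, Wfac q c d (p.1 j.succ - p.2 j.succ)
        (p.1 j.succ - p.1 j.castSucc) (p.2 j.succ - p.2 j.castSucc) :=
      Finset.prod_nonneg fun j _ => (Wfac_mem hc1 hc2 hd1 hd2 hq0 hq1 _ _ _).1
    rw [hkeq]
    calc a ^ k₁ * b ^ k₂ * (qPoch (c*d) q k₂ / qPoch q q k₂) *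
          (∏ j : Fin N, Wfac q c d (p.1 j.succ - p.2 j.succ)
            (p.1 j.succ - p.1 j.castSucc) (p.2 j.succ - p.2 j.castSucc))
        ≤ (M ^ N * r ^ (k₁ - N)) * (1 / Cq) * 1 :=
          mul_le_mul
            (mul_le_mul hA hratio (div_nonneg (hpcd k₂).1 (hqqpos k₂).le)
              (mul_nonneg (pow_nonneg (le_trans zero_le_one hM1) N) (pow_nonneg hr0 _)))
            hprod hprod0
            (mul_nonneg (mul_nonneg (pow_nonneg (le_trans zero_le_one hM1) N)
              (pow_nonneg hr0 _)) (div_nonneg zero_le_one hCq.le))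
    _ = G k₁ := by
          show M ^ N * r ^ (k₁ - N) * (1 / Cq) * 1 = M ^ N / Cq * r ^ (k₁ - N)
          ring
  -- summability of the comparison function
  have hG0 : Summable (fun k : ℕ => r ^ (k - N)) := by
    apply (summable_nat_add_iff (f := fun k : ℕ => r ^ (k - N)) N).mp
    simpa using summable_geometric_of_lt_one hr0 hab
  have hGsum : Summable G := hG0.mul_left _
  -- the injective encoding
  set e : TLset N → ℕ × ((Fin N → Bool) × (Fin N → Bool)) := fun p =>
    ((-(p.val.2 0)).toNat,
      (fun j => decide (p.val.1 j.succ = p.val.1 j.castSucc + 1),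
       fun j => decide (p.val.2 j.succ = p.val.2 j.castSucc + 1))) with hedef
  have hinj : Function.Injective e := by
    rintro ⟨p, h0, hle, b1, b2⟩ ⟨p', h0', hle', b1', b2'⟩ h
    simp only [hedef, Prod.mk.injEq] at h
    obtain ⟨hk, hB1, hB2⟩ := h
    have h20 : p.2 0 = p'.2 0 := by
      have e1 : p.2 0 ≤ 0 := h0 ▸ hle 0
      have e2 : p'.2 0 ≤ 0 := h0' ▸ hle' 0
      omega
    have h10 : p.1 0 = p'.1 0 := by rw [h0, h0']
    apply Subtype.ext
    exact Prod.ext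
      (bpath_eq_of_incr b1 b1' h10 (fun j => congrFun hB1 j))
      (bpath_eq_of_incr b2 b2' h20 (fun j => congrFun hB2 j))
  have hsum : Summable (fun p : TLset N => twt N q a b c d p.val) := by
    have hGnn : ∀ k, 0 ≤ G k := fun k =>
      mul_nonneg (div_nonneg (pow_nonneg (le_trans zero_le_one hM1) N) hCq.le)
        (pow_nonneg hr0 _)
    have h2 : Summable (fun _ : (Fin N → Bool) × (Fin N → Bool) => (1:ℝ)) :=
      Summable.of_finite
    have h0 : (0 : ℕ → ℝ) ≤ G := hGnn
    have h1 : (0 : (Fin N → Bool) × (Fin N → Bool) → ℝ) ≤ (fun _ => (1:ℝ)) :=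
      fun _ => zero_le_one
    have hGe : Summable (fun x : ℕ × ((Fin N → Bool) × (Fin N → Bool)) => G x.1 * 1) :=
      Summable.mul_of_nonneg (f := G)
        (g := fun _ : (Fin N → Bool) × (Fin N → Bool) => (1:ℝ)) hGsum h2 h0 h1
    have hGe' : Summable (fun x : ℕ × ((Fin N → Bool) × (Fin N → Bool)) => G x.1) := by
      simpa using hGe
    have hcomp : Summable ((fun x : ℕ × ((Fin N → Bool) × (Fin N → Bool)) => G x.1) ∘ e) :=
      hGe'.comp_injective hinj
    apply Summable.of_nonneg_of_le (fun p => htwt0 p.val) _ hcomp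
    intro p
    exact hkey p
  refine ⟨hsum, ?_⟩
  -- positivity: evaluate at the zero configuration
  have hmem : ((fun _ => (0:ℤ)), (fun _ => (0:ℤ))) ∈ TLset N :=
    ⟨rfl, fun j => le_refl 0, fun j => Or.inl rfl, fun j => Or.inl rfl⟩
  set p₀ : TLset N := ⟨((fun _ => (0:ℤ)), (fun _ => (0:ℤ))), hmem⟩ with hp0
  have hval : twt N q a b c d p₀.val = (1 + c) ^ N := by
    rw [twt]
    simp only [hp0]
    norm_num [qPoch, Wfac]
  apply Summable.tsum_pos hsum (fun p => htwt0 p.val) p₀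
  rw [hval]
  have : (0:ℝ) < 1 + c := by linarith
  positivity
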